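/- arXiv:2602.15308 — 4 statements merged into one kernel-verified Lean document; each statement's English description precedes it below -/
import Mathlib

section
/- For all α, β ∈ (0,1) and every odd positive integer n, A_n(α,β,1) > 0. -/
open Real MeasureTheory Set Finset

noncomputable section

/-- Generalized binomial coefficient `C(α,k) = (∏_{j=0}^{k-1} (α-j)) / k!`. -/
def genBinom (α : ℝ) (k : ℕ) : ℝ :=
  (∏ j ∈ Finset.range k, (α - j)) / (Nat.factorial k)

/-- Ascending Pochhammer symbol `(a)_k = a (a+1) ⋯ (a+k-1)`. -/
def pochh (a : ℝ) (k : ℕ) : ℝ := ∏ j ∈ Finset.range k, (a + j)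

/-- `A_n(α,β,ω)`, the `n`-th Maclaurin coefficient of `(1+ωz)^α (1-z)^(-β)`. -/
def brA (α β : ℝ) (ω : ℂ) (n : ℕ) : ℂ :=
  ∑ k ∈ Finset.range (n + 1),
    ((genBinom α k * (pochh β (n - k) / Nat.factorial (n - k)) : ℝ) : ℂ) * ω ^ k

/-- `A_n(α,β,x)` for real `x` (real-valued version). -/
def brAR (α β x : ℝ) (n : ℕ) : ℝ :=
  ∑ k ∈ Finset.range (n + 1),
    genBinom α k * (pochh β (n - k) / Nat.factorial (n - k)) * x ^ k

/-- `w_n(α,β,x)` for complex `x`. -/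
def wC (α β : ℝ) (n : ℕ) (x : ℂ) : ℂ :=
  ((Real.Gamma (n - α) * Real.Gamma (1 + α) * Real.sin (π * α) / Nat.factorial n : ℝ) : ℂ) *
    ∑ k ∈ Finset.range (n + 1),
      ((pochh β k * pochh (-(n : ℝ)) k / (pochh (α - n + 1) k * Nat.factorial k) : ℝ) : ℂ) * x ^ k

/-- `w_n(α,β,x)` for real `x` (real-valued version). -/
def wR (α β : ℝ) (n : ℕ) (x : ℝ) : ℝ :=
  (Real.Gamma (n - α) * Real.Gamma (1 + α) * Real.sin (π * α) / Nat.factorial n) *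
    ∑ k ∈ Finset.range (n + 1),
      pochh β k * pochh (-(n : ℝ)) k / (pochh (α - n + 1) k * Nat.factorial k) * x ^ k

/-- `R(s,φ) = √(e^{2s} + 1 - 2 e^s cos φ)`. -/
def Rker (s φ : ℝ) : ℝ := Real.sqrt (Real.exp (2 * s) + 1 - 2 * Real.exp s * Real.cos φ)

/-- `I₁(α,β,φ;n)`. -/
def brI1 (α β φ : ℝ) (n : ℕ) : ℝ :=
  ((π - φ) ^ 2)⁻¹ *
    ∫ s in Set.Ioi (0 : ℝ),
      (Real.exp s - 1) ^ (-β) * ((Real.exp s + 1) ^ α - Rker s φ ^ α) * Real.exp (-(n : ℝ) * s)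

/-- `I₂(α,β,φ;n)`. -/
def brI2 (α β φ : ℝ) (n : ℕ) : ℝ :=
  ((π - φ) ^ 2)⁻¹ *
    ∫ s in Set.Ioi (0 : ℝ),
      (Real.exp s - 1) ^ α * ((Real.exp s + 1) ^ (-β) - Rker s φ ^ (-β)) * Real.exp (-(n : ℝ) * s)

/-- `h(α,β,φ;n)`. -/
def hFun (α β φ : ℝ) (n : ℕ) : ℝ :=
  Real.sin (π * β) * brI1 α β φ n + Real.sin (π * α) * brI2 α β φ n

/-- `C₁(α,φ)`. -/
def C1f (α φ : ℝ) : ℝ :=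
  ((π - φ) ^ 2)⁻¹ * ((2 : ℝ) ^ α - (2 * Real.sin (φ / 2)) ^ α)

/-- `C₂(β,φ)`. -/
def C2f (β φ : ℝ) : ℝ :=
  ((π - φ) ^ 2)⁻¹ * ((2 * Real.sin (φ / 2)) ^ (-β) - (2 : ℝ) ^ (-β))

/-- `K₁(α,β,φ;s)`. -/
def K1f (α β φ s : ℝ) : ℝ :=
  (s ^ 2)⁻¹ *
    ((s / (Real.exp s - 1)) ^ β * ((Real.exp s + 1) ^ α - Rker s φ ^ α) /
        ((2 : ℝ) ^ α - (2 * Real.sin (φ / 2)) ^ α) - 1 - (α - β) / 2 * s)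

/-- `K₂(α,β,φ;s)`. -/
def K2f (α β φ s : ℝ) : ℝ :=
  (s ^ 2)⁻¹ *
    (((Real.exp s - 1) / s) ^ α * (Rker s φ ^ (-β) - (Real.exp s + 1) ^ (-β)) /
        ((2 * Real.sin (φ / 2)) ^ (-β) - (2 : ℝ) ^ (-β)) - 1 - (α - β) / 2 * s)

/-- `A₁(α,φ)`. -/
def A1f (α φ : ℝ) : ℝ :=
  (1 - α) * ((2 : ℝ) ^ α - (2 * Real.sin (φ / 2)) ^ α) /
    (Real.sin (π * α) * Real.Gamma (1 + α) * (π - φ) ^ 2)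

/-- `A₂(α,β,φ)`. -/
def A2f (α β φ : ℝ) : ℝ :=
  (1 - α) * Real.Gamma β * ((2 * Real.sin (φ / 2)) ^ (-β) - (2 : ℝ) ^ (-β)) /
    (π * (π - φ) ^ 2)

/-- `L(α,β,φ;s)`. -/
def Lf (α β φ s : ℝ) : ℝ :=
  s ^ 2 / (α + β) *
    (A1f α φ * K1f α β φ s / (Real.Gamma (1 - β) * s ^ β) -
      s ^ α * A2f α β φ * K2f α β φ s / Real.Gamma (1 + α))

/-- `E₀(α,β,φ;n)`. -/
def E0f (α β φ : ℝ) (n : ℕ) : ℝ :=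
  (n : ℝ) ^ (1 + α - β) * ∫ s in (0:ℝ)..1, Lf α β φ s * Real.exp (-(n : ℝ) * s)

/-- `E∞(α,β,φ;n)`. -/
def EInf (α β φ : ℝ) (n : ℕ) : ℝ :=
  (n : ℝ) ^ (1 + α - β) * ∫ s in Set.Ioi (1:ℝ), Lf α β φ s * Real.exp (-(n : ℝ) * s)

/-- Upper incomplete Gamma function `Γ(a,x) = ∫_x^∞ t^{a-1} e^{-t} dt`. -/
def iGamma (a x : ℝ) : ℝ := ∫ t in Set.Ioi x, t ^ (a - 1) * Real.exp (-t)

/-- `𝓗(α,β,φ;n)`. -/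
def Hf (α β φ : ℝ) (n : ℕ) : ℝ :=
  (1 - α) * (n : ℝ) ^ (1 + α - β) * hFun α β φ n /
    ((α + β) * Real.sin (π * α) * Real.sin (π * β) * Real.Gamma (1 - β) * Real.Gamma (1 + α))

/-- `𝓗⁽²⁾(α,β,φ;n)`. -/
def H2f (α β φ : ℝ) (n : ℕ) : ℝ :=
  (α + β)⁻¹ *
    (A1f α φ * (n : ℝ) ^ α * (1 + (α - β) * (1 - β) / (2 * n)) -
      A2f α β φ * (n : ℝ) ^ (-β) * (1 + (α - β) * (1 + α) / (2 * n)))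

/-- `P_n(α,β,φ;μ₀,μ∞)` for real `n > 0`. -/
def Pf (n α β φ μ0 μi : ℝ) : ℝ :=
  (α + β)⁻¹ *
      (A1f α φ * n ^ α * (1 + (α - β) * (1 - β) / (2 * n)) -
        A2f α β φ * n ^ (-β) * (1 + (α - β) * (1 + α) / (2 * n))) -
    μ0 * Real.Gamma (2 - β) * n ^ (α - 1) - μi * iGamma (3 + α) n * n ^ (-2 - β)

/-- `Q_n(α,β,φ)` for real `n > 0`. -/
def Qf (n α β φ : ℝ) : ℝ :=
  π * (α + β) * Real.sin (π * α) * Real.Gamma (1 + α) * (π - φ) ^ 2 /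
    ((1 - α) * Real.Gamma β * n ^ (1 + α - β))

/-- `F₁(α,β,φ)`. -/
def F1f (α β φ : ℝ) : ℝ :=
  (α + β)⁻¹ * (A1f α φ - max (1 - (α + β)) 0 * (5 : ℝ) ^ (-(α + β)) * A2f α β φ)

/-- `F₂(α,β,φ)`. -/
def F2f (α β φ : ℝ) : ℝ :=
  (α + β)⁻¹ *
    (A1f α φ -
      (5 : ℝ) ^ (-(α + β)) * (|1 - (α + β)| + (α + β) * |(α - β) * (1 + α) / 2| / 5) * A2f α β φ)

/-- `J(α,β,φ;μ₀,μ∞;n)` for real `n > 0`. -/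
def Jf (α β φ μ0 μi : ℝ) (n : ℝ) : ℝ :=
  (α + β)⁻¹ * A1f α φ * (n + (α - β) * (1 - β) / 2) -
    (α + β)⁻¹ * n ^ (-(α + β)) * A2f α β φ * (n + (α - β) * (1 + α) / 2) -
    μ0 * Real.Gamma (2 - β) - μi * iGamma (3 + α) n * n ^ (-1 - (α + β))


def myE (β : ℝ) (m : ℕ) : ℝ := pochh β m / Nat.factorial m

def myA (α β : ℝ) (n : ℕ) : ℝ := ∑ k ∈ Finset.range (n+1), genBinom α k * myE β (n - k)

def myT (α β : ℝ) (n : ℕ) : ℝ :=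
  ∑ k ∈ Finset.range (n+1), (k : ℝ) * (genBinom α k * myE β (n - k))

lemma brAR_one_eq (α β : ℝ) (n : ℕ) : brAR α β 1 n = myA α β n := by
  unfold brAR myA myE
  simp [one_pow, mul_one]

lemma genBinom_succ_mul (α : ℝ) (k : ℕ) :
    ((k:ℝ)+1) * genBinom α (k+1) = (α - k) * genBinom α k := by
  unfold genBinom
  rw [Finset.prod_range_succ, Nat.factorial_succ]
  have h1 : (Nat.factorial k : ℝ) ≠ 0 := by
    exact_mod_cast Nat.factorial_ne_zero k
  push_cast
  field_simp

lemma myE_succ_mul (β : ℝ) (m : ℕ) :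
    ((m:ℝ)+1) * myE β (m+1) = (β + m) * myE β m := by
  unfold myE pochh
  rw [Finset.prod_range_succ, Nat.factorial_succ]
  have h1 : (Nat.factorial m : ℝ) ≠ 0 := by
    exact_mod_cast Nat.factorial_ne_zero m
  push_cast
  field_simp

lemma myT_succ (α β : ℝ) (n : ℕ) :
    myT α β (n+1) = α * myA α β n - myT α β n := by
  unfold myT myA
  rw [Finset.sum_range_succ']
  simp only [Nat.cast_zero, zero_mul, add_zero, Nat.add_sub_add_right]
  have h : ∀ k ∈ Finset.range (n+1),
      ((k+1 : ℕ):ℝ) * (genBinom α (k+1) * myE β (n - k)) =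
        (α - k) * genBinom α k * myE β (n - k) := by
    intro k hk
    push_cast
    have h0 := genBinom_succ_mul α k
    linear_combination myE β (n - k) * h0
  rw [Finset.sum_congr rfl h]
  rw [Finset.mul_sum, ← Finset.sum_sub_distrib]
  exact Finset.sum_congr rfl (fun k hk => by ring)

lemma myA_succ_mul (α β : ℝ) (n : ℕ) :
    ((n:ℝ)+1) * myA α β (n+1) = ((n:ℝ)+α+β) * myA α β n - 2 * myT α β n := by
  have key : ((n:ℝ)+1) * myA α β (n+1) =
      myT α β (n+1)
        + ∑ k ∈ Finset.range (n+2), ((n+1-k : ℕ):ℝ) * (genBinom α k * myE β (n+1-k)) := by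
    unfold myA myT
    rw [Finset.mul_sum, ← Finset.sum_add_distrib]
    apply Finset.sum_congr rfl
    intro k hk
    have hk' : k ≤ n + 1 := Nat.lt_succ_iff.mp (Finset.mem_range.mp hk)
    have hc : ((n+1-k : ℕ):ℝ) = (n:ℝ) + 1 - k := by
      push_cast [Nat.cast_sub hk']
      ring
    rw [hc]; ring
  rw [key, myT_succ]
  rw [Finset.sum_range_succ]
  simp only [Nat.sub_self, Nat.cast_zero, zero_mul, add_zero]
  have key2 : ∀ k ∈ Finset.range (n+1),
      ((n+1-k : ℕ):ℝ) * (genBinom α k * myE β (n+1-k)) =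
        β * (genBinom α k * myE β (n-k)) + ((n-k : ℕ):ℝ) * (genBinom α k * myE β (n-k)) := by
    intro k hk
    have hk' : k ≤ n := Nat.lt_succ_iff.mp (Finset.mem_range.mp hk)
    have h1 : n + 1 - k = (n - k) + 1 := by omega
    rw [h1]
    push_cast
    have h0 := myE_succ_mul β (n-k)
    linear_combination genBinom α k * h0
  rw [Finset.sum_congr rfl key2, Finset.sum_add_distrib]
  have e1 : ∑ k ∈ Finset.range (n+1), β * (genBinom α k * myE β (n-k)) = β * myA α β n := by
    unfold myA; rw [Finset.mul_sum]
  have e2 : ∑ k ∈ Finset.range (n+1), ((n-k : ℕ):ℝ) * (genBinom α k * myE β (n-k))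
      = (n:ℝ) * myA α β n - myT α β n := by
    unfold myA myT
    rw [Finset.mul_sum, ← Finset.sum_sub_distrib]
    apply Finset.sum_congr rfl
    intro k hk
    have hk' : k ≤ n := Nat.lt_succ_iff.mp (Finset.mem_range.mp hk)
    have hc : ((n-k:ℕ):ℝ) = (n:ℝ) - k := by push_cast [Nat.cast_sub hk']; ring
    rw [hc]; ring
  rw [e1, e2]
  ring

lemma myA_rec (α β : ℝ) (n : ℕ) :
    ((n:ℝ)+2) * myA α β (n+2) = (α+β) * myA α β (n+1) + ((n:ℝ)+β-α) * myA α β n := by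
  have h1 := myA_succ_mul α β (n+1)
  have h2 := myA_succ_mul α β n
  have h3 := myT_succ α β n
  push_cast at h1
  linarith

lemma myA_zero (α β : ℝ) : myA α β 0 = 1 := by
  unfold myA myE genBinom pochh
  simp

lemma myA_one (α β : ℝ) : myA α β 1 = α + β := by
  unfold myA myE genBinom pochh
  rw [Finset.sum_range_succ, Finset.sum_range_succ]
  simp [Nat.factorial]
  ring

lemma myA_two (α β : ℝ) : 2 * myA α β 2 = (α+β)*(α+β) + β - α := by
  have h := myA_rec α β 0
  rw [myA_zero, myA_one] at h
  norm_num at h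
  linarith

lemma main_ind (α β : ℝ) (hα0 : 0 < α) (hα1 : α < 1) (hβ0 : 0 < β) (hβ1 : β < 1) :
    ∀ K : ℕ, 0 < myA α β (2*K+1) ∧
      (1+α) * myA α β (2*K+1) ≤ (2*(K:ℝ)+2) * (myA α β (2*K+1) + myA α β (2*K+2)) := by
  intro K
  induction K with
  | zero =>
    have h1 : myA α β (2*0+1) = α + β := by norm_num [myA_one]
    have h2' : myA α β (2*0+2) = myA α β 2 := by norm_num
    have h2 := myA_two α β
    constructor
    · rw [h1]; linarith
    · rw [h1, h2']
      push_cast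
      nlinarith [mul_pos hα0 hβ0, sq_nonneg (α+β)]
  | succ K ih =>
    obtain ⟨hb, hv⟩ := ih
    set κ : ℝ := (K : ℝ) with hκdef
    have hκ : (0:ℝ) ≤ κ := Nat.cast_nonneg K
    set b := myA α β (2*K+1) with hbdef
    set u := myA α β (2*K+2) with hudef
    set a3 := myA α β (2*K+3) with ha3def
    set a4 := myA α β (2*K+4) with ha4def
    have e1 : (2*κ+3) * a3 = (α+β) * u + (2*κ+1+β-α) * b := by
      have h := myA_rec α β (2*K+1)
      have i1 : 2*K+1+2 = 2*K+3 := by omega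
      have i2 : 2*K+1+1 = 2*K+2 := by omega
      rw [i1, i2] at h
      rw [← hbdef, ← hudef, ← ha3def] at h
      push_cast at h
      linarith
    have e2 : (2*κ+4) * a4 = (α+β) * a3 + (2*κ+2+β-α) * u := by
      have h := myA_rec α β (2*K+2)
      have i1 : 2*K+2+2 = 2*K+4 := by omega
      have i2 : 2*K+2+1 = 2*K+3 := by omega
      rw [i1, i2] at h
      rw [← hudef, ← ha3def, ← ha4def] at h
      push_cast at h
      linarith
    have hv0 : 0 < b + u := by nlinarith [hv, hb]
    have ha3pos : 0 < a3 := by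
      have h2k : (0:ℝ) < 2*κ+2 := by linarith
      have hnum : 0 < (α+β) * u + (2*κ+1+β-α) * b := by
        have c1 : (α+β)*((1+α)*b) ≤ (α+β)*((2*κ+2)*(b+u)) :=
          mul_le_mul_of_nonneg_left hv (by linarith)
        have hbig : 0 < (2*κ+2) * ((α+β)*u + (2*κ+1+β-α)*b) := by
          nlinarith [c1, mul_nonneg (mul_nonneg hκ hκ) hb.le,
            mul_nonneg (mul_nonneg hκ (by linarith : (0:ℝ) ≤ 6-4*α)) hb.le,
            mul_pos (mul_pos (by linarith : (0:ℝ) < 1-α) (by linarith : (0:ℝ) < 2-α)) hb,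
            mul_pos (mul_pos hβ0 (by linarith : (0:ℝ) < 1+α)) hb]
        by_contra hcon
        push_neg at hcon
        nlinarith [mul_nonpos_of_nonneg_of_nonpos h2k.le hcon]
      have h3k : (0:ℝ) < 2*κ+3 := by linarith
      by_contra hcon
      push_neg at hcon
      nlinarith [mul_nonpos_of_nonneg_of_nonpos h3k.le hcon, e1, hnum]
    have idq : (2*κ+3) * ((2*κ+3+β)*a3 + (2*κ+2+β-α)*u) =
        (2*κ+3+2*β) * ((2*κ+2)*(b+u) - (1+α)*b) + β*(α+β+2)*(b+u) := by
      linear_combination (2*κ+3+β) * e1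
    have key : 0 ≤ (2*κ+3+2*β) * ((2*κ+2)*(b+u) - (1+α)*b) + β*(α+β+2)*(b+u) := by
      have t1 : 0 ≤ (2*κ+3+2*β) * ((2*κ+2)*(b+u) - (1+α)*b) := by
        apply mul_nonneg (by linarith)
        linarith [hv]
      have t2 : 0 < β*(α+β+2)*(b+u) := by
        apply mul_pos (by nlinarith) hv0
      linarith
    have hW : 0 ≤ (2*κ+3+β)*a3 + (2*κ+2+β-α)*u := by
      nlinarith [key, idq]
    have j1 : 2*(K+1)+1 = 2*K+3 := by omega
    have j2 : 2*(K+1)+2 = 2*K+4 := by omega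
    rw [j1, j2, ← ha3def, ← ha4def]
    push_cast
    constructor
    · exact ha3pos
    · have egoal : (2*κ+4)*(a3+a4) - (1+α)*a3 = (2*κ+3+β)*a3 + (2*κ+2+β-α)*u := by
        linear_combination e2
      have : (2*(κ+1)+2) = 2*κ+4 := by ring
      rw [this]
      linarith [hW, egoal]

/-- For `α, β ∈ (0,1)` and odd positive `n`, `A_n(α,β,1) > 0`. -/
theorem statement2 (α β : ℝ) (hα : α ∈ Set.Ioo (0:ℝ) 1) (hβ : β ∈ Set.Ioo (0:ℝ) 1)
    (n : ℕ) (hodd : Odd n) (hn : 0 < n) :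
    0 < brAR α β 1 n := by
  obtain ⟨K, hK⟩ := hodd
  have hn2 : n = 2*K+1 := by omega
  rw [hn2, brAR_one_eq]
  exact (main_ind α β hα.1 hα.2 hβ.1 hβ.2 K).1
end
end

section
/- Let α ∈ (0,1), β ∈ (0,1], let n ≥ 1 be an odd integer, let θ ∈ [0,π] and set φ := π − θ. Then the inequality |A_n(α,β,e^{iθ})| ≤ A_n(α,β,1) holds if and only if |w_n(α,β,e^{iφ})| ≤ w_n(α,β,−1). -/
open Real MeasureTheory Set Finset

noncomputable section

lemma pochh_succ' (a : ℝ) (k : ℕ) : pochh a (k+1) = pochh a k * (a + k) :=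
  Finset.prod_range_succ _ _

lemma pochh_neg_mul (n : ℕ) : ∀ m, m ≤ n →
    pochh (-(n:ℝ)) m * (Nat.factorial (n - m) : ℝ) = (-1)^m * (Nat.factorial n : ℝ)
  | 0, _ => by simp [pochh]
  | (m+1), h => by
    have hm : m ≤ n := Nat.le_of_succ_le h
    have key := pochh_neg_mul n m hm
    have hpos : 0 < n - m := by omega
    have hfac : ((n - m : ℕ) : ℝ) * (Nat.factorial (n - m - 1) : ℝ)
        = (Nat.factorial (n-m) : ℝ) := by
      rw [← Nat.cast_mul, Nat.mul_factorial_pred hpos.ne']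
    have hc : (-(n:ℝ) + m) = -((n - m : ℕ) : ℝ) := by
      rw [Nat.cast_sub hm]; ring
    have hidx : n - (m+1) = n - m - 1 := by omega
    rw [pochh_succ', hidx, hc]
    calc pochh (-(n:ℝ)) m * -((n-m:ℕ):ℝ) * (Nat.factorial (n-m-1) : ℝ)
        = -(pochh (-(n:ℝ)) m * (((n-m:ℕ):ℝ) * (Nat.factorial (n-m-1):ℝ))) := by ring
      _ = -(pochh (-(n:ℝ)) m * (Nat.factorial (n-m) : ℝ)) := by rw [hfac]
      _ = (-1)^(m+1) * (Nat.factorial n : ℝ) := by rw [key]; ring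

lemma prod_split (α : ℝ) (n : ℕ) : ∀ m, m ≤ n →
    (∏ j ∈ Finset.range n, (α - j)) =
      (∏ j ∈ Finset.range (n - m), (α - j)) * pochh (α - n + 1) m
  | 0, _ => by simp [pochh]
  | (m+1), h => by
    have hm : m ≤ n := Nat.le_of_succ_le h
    have key := prod_split α n m hm
    have h1 : n - m = (n - (m+1)) + 1 := by omega
    have h2 : (∏ j ∈ Finset.range (n-m), (α - (j:ℝ))) =
        (∏ j ∈ Finset.range (n-(m+1)), (α - (j:ℝ))) * (α - ((n-(m+1) : ℕ):ℝ)) := by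
      rw [h1, Finset.prod_range_succ]
    have h3 : (α - ((n-(m+1):ℕ):ℝ)) = (α - n + 1 + m) := by
      have hc : ((n - (m+1) : ℕ) : ℝ) = (n:ℝ) - (m+1) := by
        rw [Nat.cast_sub h]; push_cast; ring
      rw [hc]; ring
    rw [key, h2, h3, pochh_succ']; ring

lemma pochh_ne (α : ℝ) (h0 : 0 < α) (h1 : α < 1) (n m : ℕ) (h : m ≤ n) :
    pochh (α - n + 1) m ≠ 0 := by
  unfold pochh
  rw [Finset.prod_ne_zero_iff]
  intro j hj
  have hjm : j < m := Finset.mem_range.mp hj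
  have hjn : j + 1 ≤ n := by omega
  have hc : α - n + 1 + j = α - ((n - (j+1) : ℕ) : ℝ) := by
    rw [Nat.cast_sub hjn]; push_cast; ring
  rw [hc]
  rcases Nat.eq_zero_or_pos (n - (j+1)) with hz | hp
  · rw [hz]; simpa using h0.ne'
  · have hge : (1:ℝ) ≤ ((n - (j+1):ℕ):ℝ) := by exact_mod_cast hp
    intro hcon
    have := sub_eq_zero.mp hcon
    linarith [this]

lemma gamma_prod_aux (x : ℝ) (hx : 0 < x) (n : ℕ) :
    Real.Gamma (x + n) = (∏ j ∈ Finset.range n, (x + j)) * Real.Gamma x := by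
  induction n with
  | zero => simp
  | succ n ih =>
    have h : x + ((n:ℕ)+1 : ℕ) = (x + n) + 1 := by push_cast; ring
    have hne : x + (n:ℝ) ≠ 0 := by positivity
    rw [h, Real.Gamma_add_one hne, ih, Finset.prod_range_succ]; ring

lemma gamma_key (α : ℝ) (h0 : 0 < α) (h1 : α < 1) (n : ℕ) (hn : 1 ≤ n) (hodd : Odd n) :
    Real.Gamma ((n:ℝ) - α) * Real.Gamma (1 + α) * Real.sin (π * α) =
      π * ∏ j ∈ Finset.range n, (α - j) := by
  have hs : 0 < Real.sin (π * α) := by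
    apply Real.sin_pos_of_pos_of_lt_pi
    · positivity
    · nlinarith [Real.pi_pos]
  have hG1 : 0 < Real.Gamma (1 - α) := Real.Gamma_pos_of_pos (by linarith)
  -- Γ(n-α) = ∏_{j<n-1}(1-α+j) * Γ(1-α)
  have hcast : (n:ℝ) - α = (1 - α) + ((n-1 : ℕ):ℝ) := by
    rw [Nat.cast_sub hn]; push_cast; ring
  have hGn : Real.Gamma ((n:ℝ) - α)
      = (∏ j ∈ Finset.range (n-1), (1 - α + j)) * Real.Gamma (1-α) := by
    rw [hcast, gamma_prod_aux (1-α) (by linarith)]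
  -- Γ(1+α) = α Γ(α)
  have hG2 : Real.Gamma (1 + α) = α * Real.Gamma α := by
    rw [add_comm, Real.Gamma_add_one h0.ne']
  -- reflection
  have href : Real.Gamma α * Real.Gamma (1 - α) = π / Real.sin (π * α) :=
    Real.Gamma_mul_Gamma_one_sub α
  -- product split
  have hpr : (∏ j ∈ Finset.range n, (α - (j:ℝ)))
      = α * ∏ j ∈ Finset.range (n-1), (1 - α + j) := by
    have h1 : n = (n-1) + 1 := by omega
    rw [h1, Finset.prod_range_succ']
    have heach : ∀ j ∈ Finset.range (n-1), (α - ((j:ℕ)+1 : ℕ)) = (-1) * (1 - α + j) := by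
      intro j _; push_cast; ring
    rw [Finset.prod_congr rfl heach, Finset.prod_mul_distrib, Finset.prod_const,
      Finset.card_range]
    have hev : Even (n-1) := Nat.Odd.sub_odd hodd odd_one
    rw [hev.neg_one_pow]
    simp [Nat.add_sub_cancel]
    ring
  rw [hGn, hG2, hpr]
  have hrefl : Real.Gamma α * Real.Gamma (1-α) * Real.sin (π * α) = π := by
    rw [href]; field_simp
  linear_combination (α * ∏ j ∈ Finset.range (n-1), (1 - α + (j:ℝ))) * hrefl

lemma coeff_key (α β : ℝ) (h0 : 0 < α) (h1 : α < 1) (n : ℕ) (hn : 1 ≤ n) (hodd : Odd n)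
    (m : ℕ) (hm : m ≤ n) :
    Real.Gamma ((n:ℝ) - α) * Real.Gamma (1 + α) * Real.sin (π * α) / (Nat.factorial n) *
      (pochh β m * pochh (-(n:ℝ)) m / (pochh (α - n + 1) m * Nat.factorial m)) =
    π * (-1)^m * (genBinom α (n-m) * (pochh β m / Nat.factorial m)) := by
  have hP := pochh_ne α h0 h1 n m hm
  have h2 := pochh_neg_mul n m hm
  have h3 := prod_split α n m hm
  have h4 := gamma_key α h0 h1 n hn hodd
  have f1 : (Nat.factorial n : ℝ) ≠ 0 := Nat.cast_ne_zero.mpr (Nat.factorial_ne_zero n)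
  have f2 : (Nat.factorial (n-m) : ℝ) ≠ 0 := Nat.cast_ne_zero.mpr (Nat.factorial_ne_zero _)
  have f3 : (Nat.factorial m : ℝ) ≠ 0 := Nat.cast_ne_zero.mpr (Nat.factorial_ne_zero m)
  have h2' : pochh (-(n:ℝ)) m = (-1)^m * (Nat.factorial n : ℝ) / (Nat.factorial (n-m) : ℝ) := by
    rw [eq_div_iff f2]; linarith [h2]
  rw [h4, genBinom, h3, h2']
  field_simp

lemma wC_eq (α β : ℝ) (h0 : 0 < α) (h1 : α < 1) (n : ℕ) (hn : 1 ≤ n) (hodd : Odd n)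
    (x : ℂ) : wC α β n x =
    (π : ℂ) * ∑ k ∈ Finset.range (n+1),
      ((genBinom α k * (pochh β (n-k) / Nat.factorial (n-k)) : ℝ) : ℂ) * (-x)^(n-k) := by
  unfold wC
  rw [Finset.mul_sum, Finset.mul_sum, ← Finset.sum_range_reflect
    (fun k => (π:ℂ) * (((genBinom α k * (pochh β (n-k) / Nat.factorial (n-k)) : ℝ) : ℂ)
      * (-x)^(n-k))) (n+1)]
  apply Finset.sum_congr rfl
  intro m hmem
  have hm : m ≤ n := by
    have := Finset.mem_range.mp hmem; omega
  have hidx : n + 1 - 1 - m = n - m := by omega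
  have hidx2 : n - (n - m) = m := by omega
  rw [hidx, hidx2]
  have hkey := coeff_key α β h0 h1 n hn hodd m hm
  have hterm : ((Real.Gamma ((n:ℝ) - α) * Real.Gamma (1 + α) * Real.sin (π * α) /
      (Nat.factorial n) : ℝ) : ℂ) *
      (((pochh β m * pochh (-(n:ℝ)) m / (pochh (α - n + 1) m * Nat.factorial m) : ℝ)) : ℂ)
      = ((π * (-1)^m * (genBinom α (n-m) * (pochh β m / Nat.factorial m)) : ℝ) : ℂ) := by
    rw [← Complex.ofReal_mul, hkey]
  rw [← mul_assoc, hterm]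
  have hneg : (-x)^m = (-1:ℂ)^m * x^m := by rw [neg_pow]
  push_cast
  rw [hneg]
  ring

lemma wR_eq (α β : ℝ) (h0 : 0 < α) (h1 : α < 1) (n : ℕ) (hn : 1 ≤ n) (hodd : Odd n) :
    wR α β n (-1) = π * brAR α β 1 n := by
  unfold wR brAR
  rw [Finset.mul_sum, Finset.mul_sum, ← Finset.sum_range_reflect
    (fun k => π * (genBinom α k * (pochh β (n-k) / Nat.factorial (n-k)) * (1:ℝ)^k)) (n+1)]
  apply Finset.sum_congr rfl
  intro m hmem
  have hm : m ≤ n := by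
    have := Finset.mem_range.mp hmem; omega
  have hidx : n + 1 - 1 - m = n - m := by omega
  have hidx2 : n - (n - m) = m := by omega
  simp only [hidx, hidx2, one_pow]
  have hkey := coeff_key α β h0 h1 n hn hodd m hm
  have hsq : ((-1:ℝ))^m * (-1)^m = 1 := by
    rw [← mul_pow]; norm_num
  linear_combination ((-1:ℝ))^m * hkey +
    (π * (genBinom α (n-m) * (pochh β m / (Nat.factorial m : ℝ)))) * hsq


/-- With `φ = π - θ`, Brannan's inequality is equivalent to `|w_n(α,β,e^{iφ})| ≤ w_n(α,β,-1)`. -/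
theorem statement4 (α β : ℝ) (hα : α ∈ Set.Ioo (0:ℝ) 1) (hβ : β ∈ Set.Ioc (0:ℝ) 1)
    (n : ℕ) (hn : 1 ≤ n) (hodd : Odd n) (θ : ℝ) (hθ : θ ∈ Set.Icc (0:ℝ) π) :
    ‖brA α β (Complex.exp (θ * Complex.I)) n‖ ≤ brAR α β 1 n ↔
      ‖wC α β n (Complex.exp ((π - θ) * Complex.I))‖ ≤ wR α β n (-1) := by
  obtain ⟨h0, h1⟩ := hα
  -- -exp((π-θ)I) = exp(-θI)
  have hy : -Complex.exp ((↑π - ↑θ) * Complex.I) = Complex.exp (-(↑θ) * Complex.I) := by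
    have hsplit : ((π:ℂ) - ↑θ) * Complex.I = ↑π * Complex.I + (-↑θ) * Complex.I := by ring
    rw [hsplit, Complex.exp_add, Complex.exp_pi_mul_I]; ring
  set y : ℂ := Complex.exp (-(↑θ) * Complex.I) with hy_def
  have hyne : y ≠ 0 := Complex.exp_ne_zero _
  have hyinv : y⁻¹ = Complex.exp ((↑θ) * Complex.I) := by
    rw [hy_def, ← Complex.exp_neg]; ring_nf
  -- wC at exp((π-θ)I) equals π y^n brA(exp(θI))
  have hwc : wC α β n (Complex.exp ((↑π - ↑θ) * Complex.I))
      = (π:ℂ) * y^n * brA α β (Complex.exp ((↑θ) * Complex.I)) n := by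
    rw [wC_eq α β h0 h1 n hn hodd, hy]
    unfold brA
    rw [mul_assoc]
    simp only [Finset.mul_sum]
    apply Finset.sum_congr rfl
    intro k hk
    have hkn : k ≤ n := by have := Finset.mem_range.mp hk; omega
    have hpow : y^(n-k) = y^n * (Complex.exp ((↑θ) * Complex.I))^k := by
      rw [← hyinv, inv_pow, eq_comm, mul_inv_eq_iff_eq_mul₀ (pow_ne_zero _ hyne), ← pow_add]
      congr 1; omega
    rw [hpow]; ring
  have habs : ‖wC α β n (Complex.exp ((↑π - ↑θ) * Complex.I))‖
      = π * ‖brA α β (Complex.exp ((↑θ) * Complex.I)) n‖ := by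
    rw [hwc, norm_mul, norm_mul, norm_pow]
    have h1' : ‖y‖ = 1 := by
      rw [hy_def]
      have : (-(↑θ) * Complex.I : ℂ) = ((-θ : ℝ) : ℂ) * Complex.I := by push_cast; ring
      rw [this, Complex.norm_exp_ofReal_mul_I]
    rw [h1', one_pow, mul_one]
    congr 1
    rw [Complex.norm_real, Real.norm_eq_abs, abs_of_pos Real.pi_pos]
  have hwr : wR α β n (-1) = π * brAR α β 1 n := wR_eq α β h0 h1 n hn hodd
  rw [habs, hwr]
  constructor
  · intro h; exact mul_le_mul_of_nonneg_left h Real.pi_pos.le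
  · intro h; exact le_of_mul_le_mul_left h Real.pi_pos


end
end

section
/- Let α, β ∈ (0,1) with β ≤ α, let φ ∈ (0,π), and let μ0, μ∞ ≥ 0. Set ν := α+β, c1 := (α−β)(1−β)/2, c2 := (α−β)(1+α)/2, and define J(n) := (1/ν)·A1(α,φ)·(n + c1) − (1/ν)·n^{−ν}·A2(α,β,φ)·(n + c2) − μ0·Γ(2−β) − μ∞·Γ(3+α,n)·n^{−1−ν} for real n > 0. Then for every real n ≥ 5 the function J is differentiable at n and J′(n) ≥ F1(α,β,φ), where F1(α,β,φ) := (1/ν)·[A1(α,φ) − max(1−ν, 0)·5^{−ν}·A2(α,β,φ)]. -/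
open Real MeasureTheory Set Finset

noncomputable section

lemma my_aux_ineq (v c2 A1 A2 X Y S E : ℝ) (hv : 0 < v) (hA2 : 0 ≤ A2)
    (hcY : 0 ≤ v * c2 * Y) (hE : 0 ≤ E)
    (hXS : (1 - v) * X ≤ max (1 - v) 0 * S) :
    v⁻¹ * (A1 - max (1 - v) 0 * S * A2) ≤
      v⁻¹ * A1 - v⁻¹ * A2 * ((1 - v) * X - v * c2 * Y) + E := by
  have h1 : A2 * ((1 - v) * X - v * c2 * Y) ≤ A2 * (max (1 - v) 0 * S) := by
    nlinarith [mul_le_mul_of_nonneg_left hXS hA2, mul_nonneg hA2 hcY]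
  have h2 := mul_le_mul_of_nonneg_left h1 (inv_nonneg.mpr hv.le)
  nlinarith [h2, hE]

lemma my_iGamma_hasDerivAt (a : ℝ) (ha : 0 < a) {n : ℝ} (hn : 5 ≤ n) :
    HasDerivAt (iGamma a) (-(n ^ (a - 1) * Real.exp (-n))) n := by
  have hn4 : (4:ℝ) < n := by linarith
  have hn0 : (0:ℝ) < n := by linarith
  set f : ℝ → ℝ := fun t => t ^ (a - 1) * Real.exp (-t) with hfdef
  have hint : IntegrableOn f (Set.Ioi 0) :=
    (Real.GammaIntegral_convergent ha).congr_fun (fun x _ => mul_comm _ _) measurableSet_Ioi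
  have hcont : ContinuousOn f (Set.Ioi 0) := fun t ht =>
    ((Real.continuousAt_rpow_const t (a - 1) (Or.inl (ne_of_gt ht))).mul
      ((Real.continuous_exp.comp continuous_neg).continuousAt)).continuousWithinAt
  have heq : Set.EqOn (iGamma a) (fun x => iGamma a 4 - ∫ t in (4:ℝ)..x, f t) (Set.Ioi 4) := by
    intro x hx
    have h4x : (4:ℝ) ≤ x := le_of_lt hx
    have hIoc : IntegrableOn f (Set.Ioc 4 x) :=
      hint.mono_set (fun t ht => lt_trans (by norm_num) ht.1)
    have hIoi : IntegrableOn f (Set.Ioi x) :=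
      hint.mono_set (fun t ht => lt_trans (by linarith : (0:ℝ) < x) ht)
    have hsplit : (∫ t in Set.Ioi (4:ℝ), f t) =
        (∫ t in Set.Ioc (4:ℝ) x, f t) + ∫ t in Set.Ioi x, f t := by
      rw [← MeasureTheory.setIntegral_union (Set.Ioc_disjoint_Ioi le_rfl) measurableSet_Ioi
        hIoc hIoi, Set.Ioc_union_Ioi_eq_Ioi h4x]
    have h1 : iGamma a x = ∫ t in Set.Ioi x, f t := rfl
    have h2 : iGamma a 4 = ∫ t in Set.Ioi (4:ℝ), f t := rfl
    simp only [h1, h2, hsplit, intervalIntegral.integral_of_le h4x]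
    ring
  have hmeas : StronglyMeasurableAtFilter f (nhds n) :=
    hcont.stronglyMeasurableAtFilter isOpen_Ioi n (Set.mem_Ioi.mpr hn0)
  have hII : IntervalIntegrable f volume 4 n := by
    rw [intervalIntegrable_iff_integrableOn_Ioc_of_le (by linarith)]
    exact hint.mono_set (fun t ht => lt_trans (by norm_num) ht.1)
  have hFTC := intervalIntegral.integral_hasDerivAt_right hII hmeas
    (hcont.continuousAt (Ioi_mem_nhds hn0))
  have hg : HasDerivAt (fun x => iGamma a 4 - ∫ t in (4:ℝ)..x, f t) (-(f n)) n :=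
    hFTC.const_sub _
  exact hg.congr_of_eventuallyEq (Filter.eventuallyEq_of_mem (Ioi_mem_nhds hn4) heq)

/-- Case `β ≤ α`: `J` is differentiable on `[5,∞)` with `J'(n) ≥ F₁(α,β,φ)`. -/
theorem statement15 (α β : ℝ) (hα : α ∈ Set.Ioo (0:ℝ) 1) (hβ : β ∈ Set.Ioo (0:ℝ) 1)
    (hba : β ≤ α) (φ : ℝ) (hφ : φ ∈ Set.Ioo (0:ℝ) π)
    (μ0 μi : ℝ) (hμ0 : 0 ≤ μ0) (hμi : 0 ≤ μi) (n : ℝ) (hn : 5 ≤ n) :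
    DifferentiableAt ℝ (Jf α β φ μ0 μi) n ∧ deriv (Jf α β φ μ0 μi) n ≥ F1f α β φ := by
  obtain ⟨hα0, hα1⟩ := hα
  obtain ⟨hβ0, hβ1⟩ := hβ
  obtain ⟨hφ0, hφ1⟩ := hφ
  have hn0 : (0:ℝ) < n := by linarith
  have hne : n ≠ 0 := ne_of_gt hn0
  have hν0 : 0 < α + β := by linarith
  have h3α : (0:ℝ) < 3 + α := by linarith
  -- derivative assembly
  have hG := my_iGamma_hasDerivAt (3+α) h3α hn
  have h1 : HasDerivAt (fun x : ℝ => (α+β)⁻¹ * A1f α φ * (x + (α-β)*(1-β)/2))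
      ((α+β)⁻¹ * A1f α φ * 1) n :=
    ((hasDerivAt_id n).add_const _).const_mul _
  have h2 : HasDerivAt
      (fun x : ℝ => (α+β)⁻¹ * x ^ (-(α+β)) * A2f α β φ * (x + (α-β)*(1+α)/2))
      (((α+β)⁻¹ * (-(α+β) * n ^ (-(α+β) - 1)) * A2f α β φ) * (n + (α-β)*(1+α)/2)
        + ((α+β)⁻¹ * n ^ (-(α+β)) * A2f α β φ) * 1) n :=
    (((Real.hasDerivAt_rpow_const (Or.inl hne)).const_mul _).mul_const _).mul
      ((hasDerivAt_id n).add_const _)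
  have h4 : HasDerivAt (fun x : ℝ => μi * iGamma (3+α) x * x ^ (-1 - (α+β)))
      ((μi * (-(n ^ (3+α-1) * Real.exp (-n)))) * n ^ (-1-(α+β))
        + (μi * iGamma (3+α) n) * ((-1-(α+β)) * n ^ (-1-(α+β) - 1))) n :=
    (hG.const_mul _).mul (Real.hasDerivAt_rpow_const (Or.inl hne))
  have hJ : HasDerivAt (Jf α β φ μ0 μi)
      (((α+β)⁻¹ * A1f α φ * 1
        - (((α+β)⁻¹ * (-(α+β) * n ^ (-(α+β) - 1)) * A2f α β φ) * (n + (α-β)*(1+α)/2)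
          + ((α+β)⁻¹ * n ^ (-(α+β)) * A2f α β φ) * 1))
        - ((μi * (-(n ^ (3+α-1) * Real.exp (-n)))) * n ^ (-1-(α+β))
          + (μi * iGamma (3+α) n) * ((-1-(α+β)) * n ^ (-1-(α+β) - 1)))) n :=
    ((h1.sub h2).sub_const (μ0 * Real.Gamma (2 - β))).sub h4
  refine ⟨hJ.differentiableAt, ?_⟩
  have hXY : n ^ (-(α+β)) = n ^ (-(α+β) - 1) * n := by
    rw [← Real.rpow_add_one hne, show -(α+β) - 1 + 1 = -(α+β) by ring]
  have hiG : 0 ≤ iGamma (3+α) n := by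
    unfold iGamma
    exact MeasureTheory.setIntegral_nonneg measurableSet_Ioi (fun t ht =>
      mul_nonneg (Real.rpow_nonneg (le_of_lt (lt_trans hn0 ht)) _) (Real.exp_nonneg _))
  have hD : deriv (Jf α β φ μ0 μi) n =
      (α+β)⁻¹ * A1f α φ
        - (α+β)⁻¹ * A2f α β φ * ((1-(α+β)) * (n ^ (-(α+β) - 1) * n)
            - (α+β) * ((α-β)*(1+α)/2) * n ^ (-(α+β) - 1))
        + μi * (n ^ (3+α-1) * Real.exp (-n) * n ^ (-1-(α+β))
            + (1+(α+β)) * iGamma (3+α) n * n ^ (-1-(α+β) - 1)) := by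
    rw [hJ.deriv, hXY]; ring
  rw [ge_iff_le, hD, ← hXY]
  have hS : n ^ (-(α+β)) ≤ (5:ℝ) ^ (-(α+β)) := by
    rw [Real.rpow_neg hn0.le, Real.rpow_neg (by norm_num : (0:ℝ) ≤ 5)]
    exact inv_anti₀ (Real.rpow_pos_of_pos (by norm_num) _)
      (Real.rpow_le_rpow (by norm_num) hn hν0.le)
  have hXS : (1-(α+β)) * n ^ (-(α+β)) ≤ max (1-(α+β)) 0 * (5:ℝ) ^ (-(α+β)) := by
    rcases le_total (1-(α+β)) 0 with h | h
    · rw [max_eq_right h]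
      nlinarith [Real.rpow_nonneg hn0.le (-(α+β)), Real.rpow_nonneg (by norm_num : (0:ℝ) ≤ 5) (-(α+β))]
    · rw [max_eq_left h]
      exact mul_le_mul_of_nonneg_left hS h
  have hsin : 0 < Real.sin (φ/2) :=
    Real.sin_pos_of_pos_of_lt_pi (by linarith) (by linarith [Real.pi_pos])
  have hx2 : 2 * Real.sin (φ/2) ≤ 2 := by nlinarith [Real.sin_le_one (φ/2)]
  have hx0 : (0:ℝ) < 2 * Real.sin (φ/2) := by linarith
  have hmono : (2:ℝ) ^ (-β) ≤ (2 * Real.sin (φ/2)) ^ (-β) := by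
    rw [Real.rpow_neg (by norm_num : (0:ℝ) ≤ 2), Real.rpow_neg hx0.le]
    exact inv_anti₀ (Real.rpow_pos_of_pos hx0 _)
      (Real.rpow_le_rpow hx0.le hx2 hβ0.le)
  have hA2 : 0 ≤ A2f α β φ := by
    unfold A2f
    apply div_nonneg
    · exact mul_nonneg (mul_nonneg (by linarith) (Real.Gamma_pos_of_pos hβ0).le)
        (by linarith)
    · positivity
  have hE : 0 ≤ μi * (n ^ (3+α-1) * Real.exp (-n) * n ^ (-1-(α+β))
      + (1+(α+β)) * iGamma (3+α) n * n ^ (-1-(α+β) - 1)) := by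
    apply mul_nonneg hμi
    apply add_nonneg
    · exact mul_nonneg (mul_nonneg (Real.rpow_nonneg hn0.le _) (Real.exp_nonneg _))
        (Real.rpow_nonneg hn0.le _)
    · exact mul_nonneg (mul_nonneg (by linarith) hiG) (Real.rpow_nonneg hn0.le _)
  have hcY : 0 ≤ (α+β) * ((α-β)*(1+α)/2) * n ^ (-(α+β) - 1) := by
    apply mul_nonneg (mul_nonneg hν0.le (by nlinarith)) (Real.rpow_nonneg hn0.le _)
  unfold F1f
  exact my_aux_ineq (α+β) ((α-β)*(1+α)/2) (A1f α φ) (A2f α β φ) (n ^ (-(α+β)))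
    (n ^ (-(α+β) - 1)) ((5:ℝ) ^ (-(α+β))) _ hν0 hA2 hcY hE hXS


end
end

section
/- Let α, β ∈ (0,1) with α < β, let φ ∈ (0,π), and let μ0, μ∞ ≥ 0. Set ν := α+β, c1 := (α−β)(1−β)/2, c2 := (α−β)(1+α)/2, and define J(n) := (1/ν)·A1(α,φ)·(n + c1) − (1/ν)·n^{−ν}·A2(α,β,φ)·(n + c2) − μ0·Γ(2−β) − μ∞·Γ(3+α,n)·n^{−1−ν} for real n > 0. Then for every real n ≥ 5 the function J is differentiable at n and J′(n) ≥ F2(α,β,φ), where F2(α,β,φ) := (1/ν)·[A1(α,φ) − 5^{−ν}·(|1−ν| + ν·|c2|/5)·A2(α,β,φ)]. -/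
open Real MeasureTheory Set Finset

noncomputable section

lemma iGamma_hasDerivAt' (a : ℝ) (ha : 0 < a) (n : ℝ) (hn : 0 < n) :
    HasDerivAt (iGamma a) (-(n ^ (a - 1) * Real.exp (-n))) n := by
  set f : ℝ → ℝ := fun t => t ^ (a - 1) * Real.exp (-t) with hf
  have hint : IntegrableOn f (Set.Ioi 0) := by
    have h := Real.GammaIntegral_convergent ha
    exact h.congr_fun (fun t ht => by simp [hf, mul_comm]) measurableSet_Ioi
  have hcont : ContinuousOn f (Set.Ioi 0) := by
    apply ContinuousOn.mul
    · exact fun x hx => (Real.continuousAt_rpow_const x _ (Or.inl (ne_of_gt hx))).continuousWithinAt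
    · exact (Real.continuous_exp.comp continuous_neg).continuousOn
  have hcontn : ContinuousAt f n := hcont.continuousAt (Ioi_mem_nhds hn)
  have hFTC : HasDerivAt (fun u => ∫ x in (0:ℝ)..u, f x) (f n) n := by
    apply intervalIntegral.integral_hasDerivAt_right
    · rw [intervalIntegrable_iff]
      exact hint.mono_set (by rw [Set.uIoc_of_le hn.le]; exact Set.Ioc_subset_Ioi_self)
    · exact ⟨_, Ioi_mem_nhds hn, hint.aestronglyMeasurable⟩
    · exact hcontn
  have key : ∀ x ∈ Set.Ioi (0:ℝ), iGamma a x = (∫ t in Set.Ioi (0:ℝ), f t) - ∫ t in (0:ℝ)..x, f t := by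
    intro x hx
    have hsplit : (∫ t in Set.Ioi (0:ℝ), f t)
        = (∫ t in Set.Ioc (0:ℝ) x, f t) + ∫ t in Set.Ioi x, f t := by
      rw [← MeasureTheory.setIntegral_union (Set.Ioc_disjoint_Ioi le_rfl) measurableSet_Ioi
        (hint.mono_set Set.Ioc_subset_Ioi_self) (hint.mono_set (Set.Ioi_subset_Ioi hx.le))]
      rw [Set.Ioc_union_Ioi_eq_Ioi hx.le]
    rw [intervalIntegral.integral_of_le hx.le, iGamma, hsplit]; ring
  have heq : iGamma a =ᶠ[nhds n] fun x => (∫ t in Set.Ioi (0:ℝ), f t) - ∫ t in (0:ℝ)..x, f t := by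
    filter_upwards [Ioi_mem_nhds hn] with x hx using key x hx
  have := (hasDerivAt_const n (∫ t in Set.Ioi (0:ℝ), f t)).sub hFTC
  simpa using this.congr_of_eventuallyEq heq

set_option maxHeartbeats 1000000 in
/-- Case `α < β`: `J` is differentiable on `[5,∞)` with `J'(n) ≥ F₂(α,β,φ)`. -/
theorem statement16 (α β : ℝ) (hα : α ∈ Set.Ioo (0:ℝ) 1) (hβ : β ∈ Set.Ioo (0:ℝ) 1)
    (hab : α < β) (φ : ℝ) (hφ : φ ∈ Set.Ioo (0:ℝ) π)
    (μ0 μi : ℝ) (hμ0 : 0 ≤ μ0) (hμi : 0 ≤ μi) (n : ℝ) (hn : 5 ≤ n) :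
    DifferentiableAt ℝ (Jf α β φ μ0 μi) n ∧ deriv (Jf α β φ μ0 μi) n ≥ F2f α β φ := by
  obtain ⟨hα0, hα1⟩ := hα
  obtain ⟨hβ0, hβ1⟩ := hβ
  obtain ⟨hφ0, hφπ⟩ := hφ
  have hn0 : (0:ℝ) < n := by linarith
  set ν : ℝ := α + β with hν
  set c1 : ℝ := (α - β) * (1 - β) / 2 with hc1
  set c2 : ℝ := (α - β) * (1 + α) / 2 with hc2
  have hν0 : 0 < ν := by rw [hν]; linarith
  -- derivative construction
  have hr1 : HasDerivAt (fun x : ℝ => x ^ (-ν)) (-ν * n ^ (-ν - 1)) n :=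
    Real.hasDerivAt_rpow_const (Or.inl hn0.ne')
  have hr2 : HasDerivAt (fun x : ℝ => x ^ (-1 - ν)) ((-1 - ν) * n ^ (-1 - ν - 1)) n :=
    Real.hasDerivAt_rpow_const (Or.inl hn0.ne')
  have hG : HasDerivAt (iGamma (3 + α)) (-(n ^ (3 + α - 1) * Real.exp (-n))) n :=
    iGamma_hasDerivAt' (3 + α) (by linarith) n hn0
  have h1 : HasDerivAt (fun x : ℝ => ν⁻¹ * A1f α φ * (x + c1)) (ν⁻¹ * A1f α φ * 1) n :=
    ((hasDerivAt_id n).add_const c1).const_mul _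
  have h2 : HasDerivAt (fun x : ℝ => ν⁻¹ * x ^ (-ν) * A2f α β φ * (x + c2))
      ((ν⁻¹ * (-ν * n ^ (-ν - 1)) * A2f α β φ) * (n + c2)
        + (ν⁻¹ * n ^ (-ν) * A2f α β φ) * 1) n :=
    ((hr1.const_mul ν⁻¹).mul_const (A2f α β φ)).mul ((hasDerivAt_id n).add_const c2)
  have h4 : HasDerivAt (fun x : ℝ => μi * iGamma (3 + α) x * x ^ (-1 - ν))
      ((μi * -(n ^ (3 + α - 1) * Real.exp (-n))) * n ^ (-1 - ν)
        + (μi * iGamma (3 + α) n) * ((-1 - ν) * n ^ (-1 - ν - 1))) n :=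
    (hG.const_mul μi).mul hr2
  have hJ := ((h1.sub h2).sub_const (μ0 * Real.Gamma (2 - β))).sub h4
  have hJf : Jf α β φ μ0 μi = fun x : ℝ =>
      ν⁻¹ * A1f α φ * (x + c1) - ν⁻¹ * x ^ (-ν) * A2f α β φ * (x + c2)
        - μ0 * Real.Gamma (2 - β) - μi * iGamma (3 + α) x * x ^ (-1 - ν) := rfl
  clear_value ν c1 c2
  -- nonnegativity facts
  have hsin : 0 < Real.sin (φ / 2) :=
    Real.sin_pos_of_pos_of_lt_pi (by linarith) (by linarith [Real.pi_pos])
  have h2s : 0 < 2 * Real.sin (φ / 2) := by linarith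
  have h2s2 : 2 * Real.sin (φ / 2) ≤ 2 := by linarith [Real.sin_le_one (φ / 2)]
  have hpow : (2:ℝ) ^ (-β) ≤ (2 * Real.sin (φ / 2)) ^ (-β) :=
    Real.rpow_le_rpow_of_nonpos h2s h2s2 (by linarith)
  have hA2 : 0 ≤ A2f α β φ := by
    apply div_nonneg _ (by positivity)
    exact mul_nonneg (mul_nonneg (by linarith) (Real.Gamma_pos_of_pos hβ0).le)
      (by linarith)
  have hG0 : 0 ≤ iGamma (3 + α) n :=
    MeasureTheory.setIntegral_nonneg measurableSet_Ioi fun t ht =>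
      mul_nonneg (Real.rpow_nonneg (le_of_lt (lt_trans hn0 ht)) _) (Real.exp_pos _).le
  have hT2a : 0 ≤ μi * (n ^ (3 + α - 1) * Real.exp (-n)) * n ^ (-1 - ν) :=
    mul_nonneg (mul_nonneg hμi
      (mul_nonneg (Real.rpow_nonneg hn0.le _) (Real.exp_pos _).le))
      (Real.rpow_nonneg hn0.le _)
  have hT2b : 0 ≤ μi * iGamma (3 + α) n * ((1 + ν) * n ^ (-1 - ν - 1)) :=
    mul_nonneg (mul_nonneg hμi hG0)
      (mul_nonneg (by linarith) (Real.rpow_nonneg hn0.le _))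
  -- key bound
  have hnn1 : 0 ≤ n ^ (-ν) := Real.rpow_nonneg hn0.le _
  have hnn2 : 0 ≤ n ^ (-ν - 1) := Real.rpow_nonneg hn0.le _
  have hb1 : n ^ (-ν) ≤ (5:ℝ) ^ (-ν) :=
    Real.rpow_le_rpow_of_nonpos (by norm_num) hn (by linarith)
  have hb2 : n ^ (-ν - 1) ≤ (5:ℝ) ^ (-ν - 1) :=
    Real.rpow_le_rpow_of_nonpos (by norm_num) hn (by linarith)
  have h5 : (5:ℝ) ^ (-ν - 1) = (5:ℝ) ^ (-ν) / 5 := by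
    rw [Real.rpow_sub (by norm_num), Real.rpow_one]
  have hnn : n ^ (-ν - 1) * n = n ^ (-ν) := by
    rw [← Real.rpow_add_one hn0.ne']; norm_num
  have e1 : ν * n ^ (-ν - 1) * (n + c2) = ν * n ^ (-ν) + ν * c2 * n ^ (-ν - 1) := by
    linear_combination ν * hnn
  have q1 : 0 ≤ (|1 - ν| - (1 - ν)) * n ^ (-ν) :=
    mul_nonneg (by linarith [le_abs_self (1 - ν)]) hnn1
  have q2 : |1 - ν| * n ^ (-ν) ≤ |1 - ν| * (5:ℝ) ^ (-ν) :=
    mul_le_mul_of_nonneg_left hb1 (abs_nonneg _)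
  have h11 : (1 - ν) * n ^ (-ν) ≤ |1 - ν| * (5:ℝ) ^ (-ν) := by nlinarith [q1, q2]
  have p1 : 0 ≤ ν * (|c2| + c2) * n ^ (-ν - 1) :=
    mul_nonneg (mul_nonneg hν0.le (by linarith [neg_abs_le c2])) hnn2
  have p2 : ν * |c2| * n ^ (-ν - 1) ≤ ν * |c2| * (5:ℝ) ^ (-ν - 1) :=
    mul_le_mul_of_nonneg_left hb2 (mul_nonneg hν0.le (abs_nonneg _))
  have h12 : -(ν * c2 * n ^ (-ν - 1)) ≤ ν * |c2| * (5:ℝ) ^ (-ν - 1) := by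
    nlinarith [p1, p2]
  have key : n ^ (-ν) - ν * n ^ (-ν - 1) * (n + c2)
      ≤ (5:ℝ) ^ (-ν) * (|1 - ν| + ν * |c2| / 5) := by
    rw [e1]
    have hexp : (5:ℝ) ^ (-ν) * (|1 - ν| + ν * |c2| / 5)
        = |1 - ν| * (5:ℝ) ^ (-ν) + ν * |c2| * ((5:ℝ) ^ (-ν) / 5) := by ring
    have h12' : -(ν * c2 * n ^ (-ν - 1)) ≤ ν * |c2| * ((5:ℝ) ^ (-ν) / 5) := by
      rw [← h5]; exact h12
    linarith [h11, h12', hexp]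
  have hbig := mul_le_mul_of_nonneg_left
    (mul_le_mul_of_nonneg_left key hA2) (inv_nonneg.2 hν0.le)
  constructor
  · rw [hJf]; exact hJ.differentiableAt
  · have hJ' : HasDerivAt (fun x : ℝ => ν⁻¹ * A1f α φ * (x + c1) - ν⁻¹ * x ^ (-ν) * A2f α β φ * (x + c2) - μ0 * Real.Gamma (2 - β) - μi * iGamma (3 + α) x * x ^ (-1 - ν)) _ n := hJ
    rw [hJf, hJ'.deriv, ge_iff_le, F2f, ← hν, ← hc2]
    nlinarith [hbig, hT2a, hT2b]


end
end
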